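/- Let R be a commutative ring, n ≥ 2, and a,b ∈ R* units. Consider indices r ≠ n and s ≠ n with r,s ≤ n. The matrix that has entry a in position (r,s), b in position (n,n), 1s in the other diagonal positions outside rows/columns r,s,n, and zeros elsewhere, when multiplied on the right by t_{ns}(b⁻¹)·t_{sn}(1-b)·t_{ns}(-1)·t_{ns}(-b⁻¹(1-b)), yields the matrix with entry ab in position (r,s) and 1 in position (n,n) (other entries unchanged). -/

import Mathlib

open Matrix

lemma transvection_prod {R : Type*} [CommRing R] {m : Type*} [DecidableEq m] [Fintype m]
    (s u : m) (hsu : s ≠ u) (b : Rˣ) :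
    (1 + single u s ((b⁻¹ : Rˣ) : R)) *
      (1 + single s u (1 - (b : R))) *
      (1 + single u s (-1)) *
      (1 + single s u (-((b⁻¹ : Rˣ) : R) * (1 - (b : R)))) =
    1 + single u u (((b⁻¹ : Rˣ) : R) - 1) + single s s ((b : R) - 1) := by
  have h1 : ((b⁻¹ : Rˣ) : R) * (b : R) = 1 := by rw [← Units.val_mul]; simp
  simp only [mul_add, add_mul, one_mul, mul_one,
    Matrix.single_mul_single_same,
    Matrix.single_mul_single_of_ne _ _ _ _ hsu,
    Matrix.single_mul_single_of_ne _ _ _ _ hsu.symm,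
    zero_mul, mul_zero, add_zero, zero_add]
  ext i j
  simp only [Matrix.add_apply, Matrix.one_apply, Matrix.single, Matrix.of_apply]
  split_ifs <;>
    first
      | ring1
      | linear_combination h1
      | linear_combination ((b : R) - 1) * h1
      | linear_combination (((b⁻¹:Rˣ):R) * (b:R) - 1 - ((b⁻¹:Rˣ):R)) * h1
      | linear_combination (((b⁻¹:Rˣ):R) * (b:R) - ((b⁻¹:Rˣ):R)) * h1
      | simp_all

lemma mul_stdBasis_diag {R : Type*} [CommRing R] {m : Type*} [DecidableEq m] [Fintype m]
    (M : Matrix m m R) (k : m) (c : R) (i j : m) :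
    (M * single k k c) i j = if j = k then M i k * c else 0 := by
  rcases eq_or_ne j k with rfl | h
  · simp [Matrix.mul_single_apply_same]
  · simp [h, Matrix.mul_single_apply_of_ne _ _ _ _ _ h]

theorem monomial_block_reduction (R : Type*) [CommRing R] (n : ℕ) (hn : 1 ≤ n)
    (a b : Rˣ) (r s : Fin (n + 1)) (hr : r ≠ Fin.last n) (hs : s ≠ Fin.last n) :
    (Matrix.of fun i j : Fin (n + 1) =>
      if i = r ∧ j = s then (a : R)
      else if i = Fin.last n ∧ j = Fin.last n then (b : R)
      else if i = j ∧ i ≠ r ∧ i ≠ s then 1 else 0) *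
      ((1 + Matrix.single (Fin.last n) s ((b⁻¹ : Rˣ) : R)) *
       (1 + Matrix.single s (Fin.last n) (1 - (b : R))) *
       (1 + Matrix.single (Fin.last n) s (-1)) *
       (1 + Matrix.single s (Fin.last n) (-((b⁻¹ : Rˣ) : R) * (1 - (b : R))))) =
    (Matrix.of fun i j : Fin (n + 1) =>
      if i = r ∧ j = s then (a : R) * (b : R)
      else if i = Fin.last n ∧ j = Fin.last n then 1
      else if i = j ∧ i ≠ r ∧ i ≠ s then 1 else 0) := by
  have h2 : (b : R) * ((b⁻¹ : Rˣ) : R) = 1 := by rw [← Units.val_mul]; simp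
  rw [transvection_prod s (Fin.last n) hs b, mul_add, mul_add, mul_one]
  ext i j
  rw [Matrix.add_apply, Matrix.add_apply, mul_stdBasis_diag, mul_stdBasis_diag]
  simp only [Matrix.of_apply]
  have hls : (Fin.last n : Fin (n+1)) ≠ s := fun h => hs h.symm
  have hlr : (Fin.last n : Fin (n+1)) ≠ r := fun h => hr h.symm
  by_cases hjl : j = Fin.last n
  · subst hjl
    by_cases hil : i = Fin.last n
    · subst hil
      simp [hls, hlr]
      linear_combination h2
    · simp [hls, hlr, hil]
  · by_cases hjs : j = s
    · subst hjs
      by_cases hir : i = r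
      · subst hir
        simp [hjl, hs, hr, hls, hlr]
        ring
      · simp [hjl, hs, hir, hls, hlr]
    · simp [hjl, hjs]
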